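/- If f is operator convex on (0,∞), then the transpose function g(x) = x · f(1/x) is also operator convex on (0,∞). -/

import Mathlib

open Matrix Kronecker
open scoped ComplexOrder

noncomputable def applyFun {n : Type*} [Fintype n] [DecidableEq n]
    (f : ℝ → ℝ) (A : Matrix n n ℂ) : Matrix n n ℂ := by
  classical exact
    if hA : A.IsHermitian then
      (hA.eigenvectorUnitary : Matrix n n ℂ) *
        Matrix.diagonal (fun i => (f (hA.eigenvalues i) : ℂ)) *
        (star (hA.eigenvectorUnitary : Matrix n n ℂ))
    else 0

noncomputable def msqrt {n : Type*} [Fintype n] [DecidableEq n]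
    (A : Matrix n n ℂ) : Matrix n n ℂ := by
  classical exact if h : A.PosSemidef then
    (h.1.eigenvectorUnitary : Matrix n n ℂ) *
      Matrix.diagonal ((↑) ∘ (√·) ∘ h.1.eigenvalues) *
      (star (h.1.eigenvectorUnitary : Matrix n n ℂ)) else 0

def vecOf {m n : Type*} (A : Matrix m n ℂ) : m × n → ℂ := fun p => A p.1 p.2

noncomputable def Srel {n : Type*} [Fintype n] [DecidableEq n]
    (f : ℝ → ℝ) (ρ σ : Matrix n n ℂ) : ℝ :=
  (star (vecOf (msqrt ρ)) ⬝ᵥ (applyFun f (σ ⊗ₖ (ρ⁻¹)ᵀ) *ᵥ vecOf (msqrt ρ))).re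

def OperatorConvexOn (I : Set ℝ) (f : ℝ → ℝ) : Prop :=
  ∀ (n : ℕ) (A B : Matrix (Fin n) (Fin n) ℂ) (hA : A.IsHermitian) (hB : B.IsHermitian),
    (∀ i, hA.eigenvalues i ∈ I) → (∀ i, hB.eigenvalues i ∈ I) →
    ∀ lam : ℝ, 0 ≤ lam → lam ≤ 1 →
      ((lam : ℂ) • applyFun f A + ((1 - lam : ℝ) : ℂ) • applyFun f B -
        applyFun f ((lam : ℂ) • A + ((1 - lam : ℝ) : ℂ) • B)).PosSemidef

noncomputable def entf {n : Type*} [Fintype n] [DecidableEq n]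
    (f : ℝ → ℝ) (ρ : Matrix n n ℂ) : ℝ :=
  -(Matrix.trace (ρ * applyFun f ρ⁻¹)).re

noncomputable def ptraceB {α β : Type*} [Fintype β]
    (M : Matrix (α × β) (α × β) ℂ) : Matrix α α ℂ :=
  Matrix.of fun i j => ∑ k, M (i, k) (j, k)

noncomputable def ptraceA {α β : Type*} [Fintype α]
    (M : Matrix (α × β) (α × β) ℂ) : Matrix β β ℂ :=
  Matrix.of fun i j => ∑ k, M (k, i) (k, j)

def NonAffineOn (I : Set ℝ) (f : ℝ → ℝ) : Prop :=
  ¬ ∃ c b : ℝ, ∀ t ∈ I, f t = c * t + b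

namespace OCAux

open Polynomial

variable {n m : Type*} [Fintype n] [DecidableEq n] [Fintype m] [DecidableEq m]

set_option linter.unusedSectionVars false
set_option linter.unusedVariables false

noncomputable def cdg (U : Matrix n n ℂ) (v : n → ℝ) : Matrix n n ℂ :=
  U * Matrix.diagonal (fun i => (v i : ℂ)) * star U

lemma uconj_pow {U D : Matrix n n ℂ} (hU1 : star U * U = 1) (hU2 : U * star U = 1) (k : ℕ) :
    (U * D * star U) ^ k = U * D ^ k * star U := by
  induction k with
  | zero => simpa using hU2.symm
  | succ k ih =>
    rw [pow_succ, pow_succ, ih, show U * D ^ k * star U * (U * D * star U)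
      = U * D ^ k * (star U * U) * (D * star U) by noncomm_ring, hU1]
    noncomm_ring

lemma aeval_uconj {U : Matrix n n ℂ} (hU1 : star U * U = 1) (hU2 : U * star U = 1)
    (v : n → ℂ) (p : ℝ[X]) :
    aeval (U * diagonal v * star U) p = U * diagonal (fun i => aeval (v i) p) * star U := by
  induction p using Polynomial.induction_on' with
  | add p q hp hq =>
      have hd : (diagonal fun i => (aeval (v i)) (p + q))
          = (diagonal fun i => aeval (v i) p) + (diagonal fun i => aeval (v i) q) := by
        ext i j
        rcases eq_or_ne i j with rfl | h
        · simp [diagonal_apply_eq]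
        · simp [diagonal_apply_ne _ h]
      rw [map_add, hp, hq, hd]
      noncomm_ring
  | monomial k a =>
      simp only [aeval_monomial]
      rw [uconj_pow hU1 hU2, diagonal_pow,
        show (fun i => algebraMap ℝ ℂ a * v i ^ k) = a • (v ^ k) by
          ext i; exact (Algebra.smul_def a _).symm,
        diagonal_smul, Algebra.algebraMap_eq_smul_one, smul_mul_assoc, one_mul,
        mul_smul_comm, smul_mul_assoc]

lemma star_real_diag (v : n → ℝ) :
    (star fun i => ((v i : ℝ) : ℂ)) = fun i => ((v i : ℝ) : ℂ) := by
  funext i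
  exact Complex.conj_ofReal _

lemma cdg_isHermitian {U : Matrix n n ℂ} (v : n → ℝ) : (cdg U v).IsHermitian := by
  have h : (diagonal fun i => ((v i : ℝ) : ℂ)).IsHermitian := by
    rw [IsHermitian, diagonal_conjTranspose, star_real_diag]
  rw [cdg, star_eq_conjTranspose]
  exact isHermitian_mul_mul_conjTranspose U h

lemma cdg_star {U : Matrix n n ℂ} (v : n → ℝ) : star (cdg U v) = cdg U v := by
  rw [star_eq_conjTranspose]
  exact cdg_isHermitian v

lemma spectral {A : Matrix n n ℂ} (hA : A.IsHermitian) :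
    A = cdg (hA.eigenvectorUnitary : Matrix n n ℂ) hA.eigenvalues := by
  rw [cdg]
  convert hA.spectral_theorem using 3
  rw [Unitary.conjStarAlgAut_apply]
  rfl

lemma spectral_u1 {A : Matrix n n ℂ} (hA : A.IsHermitian) :
    star (hA.eigenvectorUnitary : Matrix n n ℂ) * (hA.eigenvectorUnitary : Matrix n n ℂ) = 1 :=
  (Matrix.mem_unitaryGroup_iff').mp (hA.eigenvectorUnitary).2

lemma spectral_u2 {A : Matrix n n ℂ} (hA : A.IsHermitian) :
    (hA.eigenvectorUnitary : Matrix n n ℂ) * star (hA.eigenvectorUnitary : Matrix n n ℂ) = 1 :=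
  (Matrix.mem_unitaryGroup_iff).mp (hA.eigenvectorUnitary).2

/-- KEY LEMMA: `applyFun` can be computed from any unitary diagonalization. -/
lemma applyFun_decomp (f : ℝ → ℝ) {U A : Matrix n n ℂ}
    (hU1 : star U * U = 1) (hU2 : U * star U = 1)
    (d : n → ℝ) (hAd : A = cdg U d) :
    applyFun f A = cdg U (fun i => f (d i)) := by
  classical
  have hA : A.IsHermitian := hAd ▸ cdg_isHermitian d
  set W : Matrix n n ℂ := (hA.eigenvectorUnitary : Matrix n n ℂ) with hW
  set ev := hA.eigenvalues
  set s : Finset ℝ := (Finset.univ.image d) ∪ (Finset.univ.image ev) with hs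
  set p : ℝ[X] := Lagrange.interpolate s id f with hpdef
  have hp : ∀ x ∈ s, p.eval x = f x := by
    intro x hx
    have := Lagrange.eval_interpolate_at_node (v := id) (r := f) (Set.injOn_id _) hx
    simpa [hpdef] using this
  have key : ∀ (V : Matrix n n ℂ), star V * V = 1 → V * star V = 1 → ∀ (e : n → ℝ),
      (∀ i, e i ∈ s) → aeval (cdg V e) p = cdg V (fun i => f (e i)) := by
    intro V hV1 hV2 e he
    rw [cdg, aeval_uconj hV1 hV2, cdg]
    have hfn : (fun i => aeval ((e i : ℂ)) p) = fun i => ((f (e i) : ℝ) : ℂ) := by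
      funext i
      have h1 : aeval ((e i : ℂ)) p = ((p.eval (e i) : ℝ) : ℂ) := by
        have := aeval_algebraMap_apply_eq_algebraMap_eval (A := ℂ) (e i) p
        simpa using this
      rw [h1, hp _ (he i)]
    rw [hfn]
  have hd_mem : ∀ i, d i ∈ s := fun i =>
    Finset.mem_union_left _ (Finset.mem_image_of_mem d (Finset.mem_univ i))
  have hev_mem : ∀ i, ev i ∈ s := fun i =>
    Finset.mem_union_right _ (Finset.mem_image_of_mem ev (Finset.mem_univ i))
  have h1 : aeval A p = cdg U (fun i => f (d i)) := by
    rw [hAd]; exact key U hU1 hU2 d hd_mem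
  have h2 : aeval A p = cdg W (fun i => f (ev i)) := by
    conv_lhs => rw [spectral hA]
    exact key W (spectral_u1 hA) (spectral_u2 hA) ev hev_mem
  have h3 : applyFun f A = cdg W (fun i => f (ev i)) := by
    unfold applyFun
    rw [dif_pos hA, cdg]
  rw [h3, ← h2, h1]

lemma cdg_mul {U : Matrix n n ℂ} (hU1 : star U * U = 1) (v w : n → ℝ) :
    cdg U v * cdg U w = cdg U (fun i => v i * w i) := by
  rw [cdg, cdg, cdg, show U * diagonal (fun i => ((v i : ℝ) : ℂ)) * star U
      * (U * diagonal (fun i => ((w i : ℝ) : ℂ)) * star U)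
    = U * diagonal (fun i => ((v i : ℝ) : ℂ)) * (star U * U)
      * (diagonal (fun i => ((w i : ℝ) : ℂ)) * star U) by noncomm_ring, hU1, mul_one,
    mul_assoc, ← mul_assoc (diagonal _), diagonal_mul_diagonal]
  rw [show (fun i => ((v i : ℝ) : ℂ) * ((w i : ℝ) : ℂ)) = fun i => ((v i * w i : ℝ) : ℂ) by
    funext i; push_cast; ring]
  rw [mul_assoc]

lemma cdg_one {U : Matrix n n ℂ} (hU2 : U * star U = 1) :
    cdg U (fun _ => 1) = 1 := by
  rw [cdg]
  have : (diagonal fun _ : n => ((1 : ℝ) : ℂ)) = 1 := by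
    rw [show (fun _ : n => ((1 : ℝ) : ℂ)) = fun _ => (1 : ℂ) by funext; norm_num, diagonal_one]
  rw [this, mul_one, hU2]

lemma cdg_congr {U : Matrix n n ℂ} {v w : n → ℝ} (h : ∀ i, v i = w i) :
    cdg U v = cdg U w := by
  have : v = w := funext h
  rw [this]

lemma cdg_mul3 {U : Matrix n n ℂ} (hU1 : star U * U = 1) (u v w : n → ℝ) :
    cdg U u * cdg U v * cdg U w = cdg U (fun i => u i * v i * w i) := by
  rw [cdg_mul hU1, cdg_mul hU1]

lemma cdg_posDef {U : Matrix n n ℂ} (hU1 : star U * U = 1) (hU2 : U * star U = 1)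
    {v : n → ℝ} (hv : ∀ i, 0 < v i) : (cdg U v).PosDef := by
  refine PosDef.of_dotProduct_mulVec_pos (cdg_isHermitian v) fun x hx => ?_
  have hd : (diagonal fun i => ((v i : ℝ) : ℂ)).PosDef := by
    refine posDef_diagonal_iff.mpr fun i => ?_
    exact_mod_cast hv i
  have hy : star U *ᵥ x ≠ 0 := by
    intro h
    apply hx
    have := congrArg (U *ᵥ ·) h
    simpa [Matrix.mulVec_mulVec, hU2] using this
  have : star x ⬝ᵥ cdg U v *ᵥ x
      = star (star U *ᵥ x) ⬝ᵥ (diagonal fun i => ((v i : ℝ) : ℂ)) *ᵥ (star U *ᵥ x) := by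
    rw [cdg, star_eq_conjTranspose, Matrix.star_mulVec, conjTranspose_conjTranspose,
      ← Matrix.dotProduct_mulVec, Matrix.mulVec_mulVec, Matrix.mulVec_mulVec]
  rw [this]
  exact hd.dotProduct_mulVec_pos hy

lemma cdg_fromBlocks {U : Matrix n n ℂ} {V : Matrix m m ℂ} (v : n → ℝ) (w : m → ℝ) :
    Matrix.fromBlocks (cdg U v) 0 0 (cdg V w)
      = cdg (Matrix.fromBlocks U 0 0 V) (Sum.elim v w) := by
  simp only [cdg, star_eq_conjTranspose]
  rw [fromBlocks_conjTranspose,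
    show (fun i => ((Sum.elim v w i : ℝ) : ℂ)) = Sum.elim (fun i => ((v i : ℝ) : ℂ))
      (fun i => ((w i : ℝ) : ℂ)) by funext i; cases i <;> rfl,
    ← fromBlocks_diagonal, fromBlocks_multiply, fromBlocks_multiply]
  simp

lemma cdg_reindex (e : n ≃ m) (U : Matrix n n ℂ) (v : n → ℝ) :
    (Matrix.reindex e e (cdg U v) : Matrix m m ℂ)
      = cdg (Matrix.reindex e e U) (v ∘ e.symm) := by
  simp only [cdg, reindex_apply, star_eq_conjTranspose, conjTranspose_submatrix]
  have hd : (diagonal fun i => (((v ∘ e.symm) i : ℝ) : ℂ))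
      = (diagonal fun i => ((v i : ℝ) : ℂ)).submatrix e.symm e.symm := by
    rw [submatrix_diagonal_equiv]
    rfl
  rw [hd, submatrix_mul_equiv, submatrix_mul_equiv]

lemma star_ofReal (r : ℝ) : star ((r : ℝ) : ℂ) = ((r : ℝ) : ℂ) := Complex.conj_ofReal r

lemma herm_real_smul {M : Matrix n n ℂ} (hM : M.IsHermitian) (r : ℝ) :
    (((r : ℝ) : ℂ) • M).IsHermitian := by
  rw [IsHermitian, conjTranspose_smul, star_ofReal, hM.eq]

lemma posdef_convex {A B : Matrix n n ℂ} (hA : A.PosDef) (hB : B.PosDef) {lam : ℝ}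
    (h0 : 0 ≤ lam) (h1 : lam ≤ 1) :
    ((lam : ℂ) • A + ((1 - lam : ℝ) : ℂ) • B).PosDef := by
  refine PosDef.of_dotProduct_mulVec_pos ((herm_real_smul hA.1 lam).add (herm_real_smul hB.1 (1 - lam))) fun x hx => ?_
  have qA := hA.dotProduct_mulVec_pos hx
  have qB := hB.dotProduct_mulVec_pos hx
  have expand : star x ⬝ᵥ ((lam : ℂ) • A + ((1 - lam : ℝ) : ℂ) • B) *ᵥ x
      = (lam : ℂ) * (star x ⬝ᵥ A *ᵥ x) + ((1 - lam : ℝ) : ℂ) * (star x ⬝ᵥ B *ᵥ x) := by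
    rw [add_mulVec, smul_mulVec, smul_mulVec, dotProduct_add,
      dotProduct_smul, dotProduct_smul]
    simp [smul_eq_mul]
  rw [expand]
  rcases lt_or_eq_of_le h0 with hl | hl
  · have t1 : 0 < (lam : ℂ) * (star x ⬝ᵥ A *ᵥ x) :=
      mul_pos (by exact_mod_cast hl) qA
    have t2 : 0 ≤ ((1 - lam : ℝ) : ℂ) * (star x ⬝ᵥ B *ᵥ x) :=
      mul_nonneg (by exact_mod_cast (by linarith : (0:ℝ) ≤ 1 - lam)) (le_of_lt qB)
    exact add_pos_of_pos_of_nonneg t1 t2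
  · rw [← hl]
    push_cast
    simpa using qB

lemma reindex_u1 (e : n ≃ m) {U : Matrix n n ℂ} (h1 : star U * U = 1) :
    star ((reindex e e U : Matrix m m ℂ)) * (reindex e e U : Matrix m m ℂ) = 1 := by
  simp only [reindex_apply, star_eq_conjTranspose, conjTranspose_submatrix]
  rw [submatrix_mul_equiv, ← star_eq_conjTranspose, h1, submatrix_one_equiv]

lemma fromBlocks_u1 {U : Matrix n n ℂ} {V : Matrix m m ℂ}
    (hU1 : star U * U = 1) (hV1 : star V * V = 1) :
    star (fromBlocks U 0 0 V) * fromBlocks U 0 0 V = 1 := by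
  simp only [star_eq_conjTranspose, fromBlocks_conjTranspose, fromBlocks_multiply,
    conjTranspose_zero, Matrix.mul_zero, Matrix.zero_mul, add_zero, zero_add]
  rw [← star_eq_conjTranspose, ← star_eq_conjTranspose, hU1, hV1, ← fromBlocks_one]

lemma theta_star : star (fromBlocks (1 : Matrix n n ℂ) 0 0 (-1 : Matrix m m ℂ))
    = fromBlocks 1 0 0 (-1) := by
  simp only [star_eq_conjTranspose, fromBlocks_conjTranspose, conjTranspose_zero,
    conjTranspose_one, conjTranspose_neg]

lemma theta_mul_self : (fromBlocks (1 : Matrix n n ℂ) 0 0 (-1 : Matrix m m ℂ))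
    * fromBlocks 1 0 0 (-1) = 1 := by
  rw [fromBlocks_multiply]
  simp [← fromBlocks_one]

lemma theta_conj (M : Matrix (n ⊕ m) (n ⊕ m) ℂ) :
    (fromBlocks (1 : Matrix n n ℂ) 0 0 (-1 : Matrix m m ℂ)) * M * fromBlocks 1 0 0 (-1)
      = fromBlocks (M.toBlocks₁₁) (-M.toBlocks₁₂) (-M.toBlocks₂₁) (M.toBlocks₂₂) := by
  conv_lhs => rw [← fromBlocks_toBlocks M]
  rw [fromBlocks_multiply, fromBlocks_multiply]
  simp

lemma submatrix_inl {o p : Type*} (A : Matrix n o ℂ) (B : Matrix n p ℂ) (C : Matrix m o ℂ)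
    (D : Matrix m p ℂ) : (fromBlocks A B C D).submatrix Sum.inl Sum.inl = A := rfl

lemma submatrix_add2 {α β : Type*} (M N : Matrix n n ℂ) (r : α → n) (c : β → n) :
    (M + N).submatrix r c = M.submatrix r c + N.submatrix r c := by
  ext i j
  simp [submatrix_apply]

lemma submatrix_sub2 {α β : Type*} (M N : Matrix n n ℂ) (r : α → n) (c : β → n) :
    (M - N).submatrix r c = M.submatrix r c - N.submatrix r c := by
  ext i j
  simp [submatrix_apply]

lemma submatrix_smul2 {α β : Type*} (z : ℂ) (M : Matrix n n ℂ) (r : α → n) (c : β → n) :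
    (z • M).submatrix r c = z • M.submatrix r c := by
  ext i j
  simp [submatrix_apply]

lemma reindex_add2 (e : n ≃ m) (M N : Matrix n n ℂ) :
    (reindex e e (M + N) : Matrix m m ℂ) = reindex e e M + reindex e e N := by
  simp only [reindex_apply, submatrix_add2]

lemma reindex_sub2 (e : n ≃ m) (M N : Matrix n n ℂ) :
    (reindex e e (M - N) : Matrix m m ℂ) = reindex e e M - reindex e e N := by
  simp only [reindex_apply, submatrix_sub2]

lemma reindex_smul2 (e : n ≃ m) (z : ℂ) (M : Matrix n n ℂ) :
    (reindex e e (z • M) : Matrix m m ℂ) = z • reindex e e M := by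
  simp only [reindex_apply, submatrix_smul2]

lemma half_smul (M : Matrix n n ℂ) :
    (((1:ℝ)/2 : ℝ) : ℂ) • M + (((1:ℝ)/2 : ℝ) : ℂ) • M = M := by
  rw [← add_smul]
  norm_num

end OCAux

open OCAux in
set_option maxHeartbeats 2000000 in
/-- if `f` is operator convex on `(0,∞)`, so is `g x = x * f (1/x)`. -/
theorem operatorConvexOn_transpose (f : ℝ → ℝ)
    (hf : OperatorConvexOn (Set.Ioi 0) f) :
    OperatorConvexOn (Set.Ioi 0) (fun x => x * f (1 / x)) := by
  classical
  intro n A B hA hB hevA hevB lam hl0 hl1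
  set g : ℝ → ℝ := fun x => x * f (1 / x) with hgdef
  have hgi : ∀ x : ℝ, g x = x * f x⁻¹ := fun x => by rw [hgdef]; simp only [one_div]
  set μ : ℝ := 1 - lam with hμdef
  have hμ0 : 0 ≤ μ := by rw [hμdef]; linarith
  have hμ1 : μ ≤ 1 := by rw [hμdef]; linarith
  -- spectral data for A and B
  set U1 : Matrix (Fin n) (Fin n) ℂ := (hA.eigenvectorUnitary : Matrix (Fin n) (Fin n) ℂ)
    with hU1def
  set dA := hA.eigenvalues with hdAdef
  have hU11 : star U1 * U1 = 1 := spectral_u1 hA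
  have hU12 : U1 * star U1 = 1 := spectral_u2 hA
  have hAspec : A = cdg U1 dA := spectral hA
  have hdA : ∀ i, 0 < dA i := fun i => hevA i
  set U2 : Matrix (Fin n) (Fin n) ℂ := (hB.eigenvectorUnitary : Matrix (Fin n) (Fin n) ℂ)
    with hU2def
  set dB := hB.eigenvalues with hdBdef
  have hU21 : star U2 * U2 = 1 := spectral_u1 hB
  have hU22 : U2 * star U2 = 1 := spectral_u2 hB
  have hBspec : B = cdg U2 dB := spectral hB
  have hdB : ∀ i, 0 < dB i := fun i => hevB i
  have hApd : A.PosDef := by rw [hAspec]; exact cdg_posDef hU11 hU12 hdA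
  have hBpd : B.PosDef := by rw [hBspec]; exact cdg_posDef hU21 hU22 hdB
  -- C
  set C := (lam : ℂ) • A + ((μ : ℝ) : ℂ) • B with hCdef
  have hCpd : C.PosDef := posdef_convex hApd hBpd hl0 hl1
  have hCherm : C.IsHermitian := hCpd.1
  set U3 : Matrix (Fin n) (Fin n) ℂ := (hCherm.eigenvectorUnitary : Matrix (Fin n) (Fin n) ℂ)
    with hU3def
  set dC := hCherm.eigenvalues with hdCdef
  have hU31 : star U3 * U3 = 1 := spectral_u1 hCherm
  have hU32 : U3 * star U3 = 1 := spectral_u2 hCherm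
  have hCspec : C = cdg U3 dC := spectral hCherm
  have hdC : ∀ i, 0 < dC i := fun i => hCpd.eigenvalues_pos i
  -- inverses
  set Ai := cdg U1 (fun i => (dA i)⁻¹) with hAidef
  set Bi := cdg U2 (fun i => (dB i)⁻¹) with hBidef
  have hAipd : Ai.PosDef := cdg_posDef hU11 hU12 (fun i => inv_pos.mpr (hdA i))
  have hBipd : Bi.PosDef := cdg_posDef hU21 hU22 (fun i => inv_pos.mpr (hdB i))
  -- D
  set D := ((μ : ℝ) : ℂ) • Ai + (lam : ℂ) • Bi with hDdef
  have hDpd : D.PosDef := by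
    have h := posdef_convex hAipd hBipd hμ0 hμ1
    have hc : ((1 - μ : ℝ) : ℂ) = (lam : ℂ) := by rw [hμdef]; push_cast; ring
    rwa [hc] at h
  have hDherm : D.IsHermitian := hDpd.1
  set U4 : Matrix (Fin n) (Fin n) ℂ := (hDherm.eigenvectorUnitary : Matrix (Fin n) (Fin n) ℂ)
    with hU4def
  set dD := hDherm.eigenvalues with hdDdef
  have hU41 : star U4 * U4 = 1 := spectral_u1 hDherm
  have hU42 : U4 * star U4 = 1 := spectral_u2 hDherm
  have hDspec : D = cdg U4 dD := spectral hDherm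
  have hdD : ∀ i, 0 < dD i := fun i => hDpd.eigenvalues_pos i
  -- square-root matrices
  set P := cdg U1 (fun i => Real.sqrt (dA i)) with hPdef
  set Pi := cdg U1 (fun i => (Real.sqrt (dA i))⁻¹) with hPidef
  set Q := cdg U2 (fun i => Real.sqrt (dB i)) with hQdef
  set Qi := cdg U2 (fun i => (Real.sqrt (dB i))⁻¹) with hQidef
  set S := cdg U3 (fun i => Real.sqrt (dC i)) with hSdef
  set T := cdg U3 (fun i => (Real.sqrt (dC i))⁻¹) with hTdef
  set R := cdg U4 (fun i => (Real.sqrt (dD i))⁻¹) with hRdef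
  set K := cdg U3 (fun i => (dC i)⁻¹) with hKdef
  -- scalar bookkeeping
  set a : ℝ := Real.sqrt lam with hadef
  set b : ℝ := Real.sqrt μ with hbdef
  have haa : ((a : ℝ) : ℂ) * ((a : ℝ) : ℂ) = ((lam : ℝ) : ℂ) := by
    rw [← Complex.ofReal_mul, hadef, Real.mul_self_sqrt hl0]
  have hbb : ((b : ℝ) : ℂ) * ((b : ℝ) : ℂ) = ((μ : ℝ) : ℂ) := by
    rw [← Complex.ofReal_mul, hbdef, Real.mul_self_sqrt hμ0]
  -- basic matrix identities
  have hPP : P * P = A := by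
    rw [hPdef, cdg_mul hU11, hAspec]
    exact cdg_congr fun i => Real.mul_self_sqrt (le_of_lt (hdA i))
  have hQQ : Q * Q = B := by
    rw [hQdef, cdg_mul hU21, hBspec]
    exact cdg_congr fun i => Real.mul_self_sqrt (le_of_lt (hdB i))
  have hsA0 : ∀ i : Fin n, Real.sqrt (dA i) ≠ 0 := fun i =>
    ne_of_gt (Real.sqrt_pos.mpr (hdA i))
  have hsB0 : ∀ i : Fin n, Real.sqrt (dB i) ≠ 0 := fun i =>
    ne_of_gt (Real.sqrt_pos.mpr (hdB i))
  have hsC0 : ∀ i : Fin n, Real.sqrt (dC i) ≠ 0 := fun i =>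
    ne_of_gt (Real.sqrt_pos.mpr (hdC i))
  have hsD0 : ∀ i : Fin n, Real.sqrt (dD i) ≠ 0 := fun i =>
    ne_of_gt (Real.sqrt_pos.mpr (hdD i))
  have hPiP : Pi * P = 1 := by
    rw [hPidef, hPdef, cdg_mul hU11, ← cdg_one hU12]
    exact cdg_congr fun i => inv_mul_cancel₀ (hsA0 i)
  have hPPi : P * Pi = 1 := by
    rw [hPidef, hPdef, cdg_mul hU11, ← cdg_one hU12]
    exact cdg_congr fun i => mul_inv_cancel₀ (hsA0 i)
  have hQiQ : Qi * Q = 1 := by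
    rw [hQidef, hQdef, cdg_mul hU21, ← cdg_one hU22]
    exact cdg_congr fun i => inv_mul_cancel₀ (hsB0 i)
  have hQQi : Q * Qi = 1 := by
    rw [hQidef, hQdef, cdg_mul hU21, ← cdg_one hU22]
    exact cdg_congr fun i => mul_inv_cancel₀ (hsB0 i)
  have hPiPi : Pi * Pi = Ai := by
    rw [hPidef, cdg_mul hU11, hAidef]
    exact cdg_congr fun i => by
      rw [← mul_inv, Real.mul_self_sqrt (le_of_lt (hdA i))]
  have hQiQi : Qi * Qi = Bi := by
    rw [hQidef, cdg_mul hU21, hBidef]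
    exact cdg_congr fun i => by
      rw [← mul_inv, Real.mul_self_sqrt (le_of_lt (hdB i))]
  have hST : S * T = 1 := by
    rw [hSdef, hTdef, cdg_mul hU31, ← cdg_one hU32]
    exact cdg_congr fun i => mul_inv_cancel₀ (hsC0 i)
  have hTS : T * S = 1 := by
    rw [hSdef, hTdef, cdg_mul hU31, ← cdg_one hU32]
    exact cdg_congr fun i => inv_mul_cancel₀ (hsC0 i)
  have hTT : T * T = K := by
    rw [hTdef, cdg_mul hU31, hKdef]
    exact cdg_congr fun i => by
      rw [← mul_inv, Real.mul_self_sqrt (le_of_lt (hdC i))]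
  have hTCT : T * C * T = 1 := by
    rw [hCspec, hTdef, cdg_mul3 hU31, ← cdg_one hU32]
    exact cdg_congr fun i => by
      rw [show (Real.sqrt (dC i))⁻¹ * dC i * (Real.sqrt (dC i))⁻¹
          = dC i / (Real.sqrt (dC i) * Real.sqrt (dC i)) by ring,
        Real.mul_self_sqrt (le_of_lt (hdC i)), div_self (ne_of_gt (hdC i))]
  have hRDR : R * D * R = 1 := by
    rw [hDspec, hRdef, cdg_mul3 hU41, ← cdg_one hU42]
    exact cdg_congr fun i => by
      rw [show (Real.sqrt (dD i))⁻¹ * dD i * (Real.sqrt (dD i))⁻¹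
          = dD i / (Real.sqrt (dD i) * Real.sqrt (dD i)) by ring,
        Real.mul_self_sqrt (le_of_lt (hdD i)), div_self (ne_of_gt (hdD i))]
  have hPAiP : P * Ai * P = 1 := by
    rw [hPdef, hAidef, cdg_mul3 hU11, ← cdg_one hU12]
    exact cdg_congr fun i => by
      rw [show Real.sqrt (dA i) * (dA i)⁻¹ * Real.sqrt (dA i)
          = Real.sqrt (dA i) * Real.sqrt (dA i) / dA i by ring,
        Real.mul_self_sqrt (le_of_lt (hdA i)), div_self (ne_of_gt (hdA i))]
  have hQBiQ : Q * Bi * Q = 1 := by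
    rw [hQdef, hBidef, cdg_mul3 hU21, ← cdg_one hU22]
    exact cdg_congr fun i => by
      rw [show Real.sqrt (dB i) * (dB i)⁻¹ * Real.sqrt (dB i)
          = Real.sqrt (dB i) * Real.sqrt (dB i) / dB i by ring,
        Real.mul_self_sqrt (le_of_lt (hdB i)), div_self (ne_of_gt (hdB i))]
  -- the contraction columns
  set X := ((a : ℝ) : ℂ) • (P * T) with hXdef
  set Y := ((b : ℝ) : ℂ) • (Q * T) with hYdef
  set Z1 := (-((b : ℝ) : ℂ)) • (Pi * R) with hZ1def
  set Z2 := ((a : ℝ) : ℂ) • (Qi * R) with hZ2def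
  have hstarX : star X = ((a : ℝ) : ℂ) • (T * P) := by
    rw [hXdef, star_smul, StarMul.star_mul, star_ofReal, hPdef, hTdef, cdg_star, cdg_star]
  have hstarY : star Y = ((b : ℝ) : ℂ) • (T * Q) := by
    rw [hYdef, star_smul, StarMul.star_mul, star_ofReal, hQdef, hTdef, cdg_star, cdg_star]
  have hstarZ1 : star Z1 = (-((b : ℝ) : ℂ)) • (R * Pi) := by
    rw [hZ1def, star_smul, StarMul.star_mul, star_neg, star_ofReal, hPidef, hRdef, cdg_star, cdg_star]
  have hstarZ2 : star Z2 = ((a : ℝ) : ℂ) • (R * Qi) := by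
    rw [hZ2def, star_smul, StarMul.star_mul, star_ofReal, hQidef, hRdef, cdg_star, cdg_star]
  -- unitarity blocks
  have hb11 : star X * X + star Y * Y = 1 := by
    rw [hstarX, hstarY, hXdef, hYdef]
    simp only [smul_mul_assoc, mul_smul_comm, smul_smul]
    rw [haa, hbb]
    rw [show T * P * (P * T) = T * (P * P) * T by noncomm_ring, hPP,
      show T * Q * (Q * T) = T * (Q * Q) * T by noncomm_ring, hQQ]
    rw [show ((lam : ℝ) : ℂ) • (T * A * T) + ((μ : ℝ) : ℂ) • (T * B * T)
        = T * ((lam : ℂ) • A + ((μ : ℝ) : ℂ) • B) * T by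
      simp only [Matrix.mul_add, Matrix.add_mul, mul_smul_comm, smul_mul_assoc]]
    rw [← hCdef, hTCT]
  have hb12 : star X * Z1 + star Y * Z2 = 0 := by
    rw [hstarX, hstarY, hZ1def, hZ2def]
    simp only [smul_mul_assoc, mul_smul_comm, smul_smul]
    rw [show T * P * (Pi * R) = T * (P * Pi) * R by noncomm_ring, hPPi,
      show T * Q * (Qi * R) = T * (Q * Qi) * R by noncomm_ring, hQQi]
    rw [← add_smul]
    convert zero_smul ℂ (T * 1 * R) using 2
    ring
  have hb21 : star Z1 * X + star Z2 * Y = 0 := by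
    rw [hstarZ1, hstarZ2, hXdef, hYdef]
    simp only [smul_mul_assoc, mul_smul_comm, smul_smul]
    rw [show R * Pi * (P * T) = R * (Pi * P) * T by noncomm_ring, hPiP,
      show R * Qi * (Q * T) = R * (Qi * Q) * T by noncomm_ring, hQiQ]
    rw [← add_smul]
    convert zero_smul ℂ (R * 1 * T) using 2
    ring
  have hb22 : star Z1 * Z1 + star Z2 * Z2 = 1 := by
    rw [hstarZ1, hstarZ2, hZ1def, hZ2def]
    simp only [smul_mul_assoc, mul_smul_comm, smul_smul]
    rw [show R * Pi * (Pi * R) = R * (Pi * Pi) * R by noncomm_ring, hPiPi,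
      show R * Qi * (Qi * R) = R * (Qi * Qi) * R by noncomm_ring, hQiQi]
    rw [show -((b:ℝ):ℂ) * -((b:ℝ):ℂ) = ((b:ℝ):ℂ) * ((b:ℝ):ℂ) by ring, haa, hbb]
    rw [show ((μ : ℝ) : ℂ) • (R * Ai * R) + ((lam : ℝ) : ℂ) • (R * Bi * R)
        = R * (((μ : ℝ) : ℂ) • Ai + (lam : ℂ) • Bi) * R by
      simp only [Matrix.mul_add, Matrix.add_mul, mul_smul_comm, smul_mul_assoc]]
    rw [← hDdef, hRDR]
  -- the unitary W
  set W := fromBlocks X Z1 Y Z2 with hWdef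
  have hstarW : star W = fromBlocks (star X) (star Y) (star Z1) (star Z2) := by
    rw [hWdef]
    simp only [star_eq_conjTranspose, fromBlocks_conjTranspose]
  have hWW : star W * W = 1 := by
    rw [hstarW, hWdef, fromBlocks_multiply, hb11, hb12, hb21, hb22, ← fromBlocks_one]
  have hWW2 : W * star W = 1 := mul_eq_one_comm.mp hWW
  -- Z and its diagonalization
  set UZ := fromBlocks U1 0 0 U2 with hUZdef
  set dZ : (Fin n ⊕ Fin n) → ℝ := Sum.elim (fun i => (dA i)⁻¹) (fun i => (dB i)⁻¹) with hdZdef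
  have hUZ1 : star UZ * UZ = 1 := fromBlocks_u1 hU11 hU21
  have hUZ2 : UZ * star UZ = 1 := mul_eq_one_comm.mp hUZ1
  set Z := fromBlocks Ai 0 0 Bi with hZdef
  have hZdec : Z = cdg UZ dZ := by
    rw [hZdef, hAidef, hBidef, hUZdef, hdZdef]
    exact cdg_fromBlocks _ _
  have hdZ : ∀ i, 0 < dZ i := by
    rintro (i | i)
    · exact inv_pos.mpr (hdA i)
    · exact inv_pos.mpr (hdB i)
  -- G and H
  set VG := star W * UZ with hVGdef
  have hVG1 : star VG * VG = 1 := by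
    rw [hVGdef, StarMul.star_mul, star_star,
      show star UZ * W * (star W * UZ) = star UZ * (W * star W) * UZ by noncomm_ring,
      hWW2, mul_one, hUZ1]
  have hVG2 : VG * star VG = 1 := mul_eq_one_comm.mp hVG1
  set G := star W * Z * W with hGdef
  have hGdec : G = cdg VG dZ := by
    have hsVG : star VG = star UZ * W := by rw [hVGdef, StarMul.star_mul, star_star]
    rw [hGdef, hZdec, cdg, cdg, hsVG, hVGdef]
    noncomm_ring
  set Th := fromBlocks (1 : Matrix (Fin n) (Fin n) ℂ) 0 0 (-1 : Matrix (Fin n) (Fin n) ℂ)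
    with hThdef
  have hThs : star Th = Th := theta_star
  have hThTh : Th * Th = 1 := theta_mul_self
  set H := Th * G * Th with hHdef
  set VH := Th * VG with hVHdef
  have hVH1 : star VH * VH = 1 := by
    rw [hVHdef, StarMul.star_mul, hThs,
      show star VG * Th * (Th * VG) = star VG * (Th * Th) * VG by noncomm_ring,
      hThTh, mul_one, hVG1]
  have hVH2 : VH * star VH = 1 := mul_eq_one_comm.mp hVH1
  have hHdec : H = cdg VH dZ := by
    have hsVH : star VH = star VG * Th := by rw [hVHdef, StarMul.star_mul, hThs]
    rw [hHdef, hGdec, cdg, cdg, hsVH, hVHdef]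
    noncomm_ring
  -- E block and block structure of G
  set E := star Z1 * Ai * Z1 + star Z2 * Bi * Z2 with hEdef
  have hEherm : E.IsHermitian := by
    have e1 : (star Z1 * Ai * Z1).IsHermitian := by
      have h := isHermitian_mul_mul_conjTranspose (Z1ᴴ) (cdg_isHermitian (U := U1)
        (fun i => (dA i)⁻¹))
      rw [conjTranspose_conjTranspose] at h
      rw [hAidef, star_eq_conjTranspose]
      exact h
    have e2 : (star Z2 * Bi * Z2).IsHermitian := by
      have h := isHermitian_mul_mul_conjTranspose (Z2ᴴ) (cdg_isHermitian (U := U2)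
        (fun i => (dB i)⁻¹))
      rw [conjTranspose_conjTranspose] at h
      rw [hBidef, star_eq_conjTranspose]
      exact h
    exact e1.add e2
  set U5 : Matrix (Fin n) (Fin n) ℂ := (hEherm.eigenvectorUnitary : Matrix (Fin n) (Fin n) ℂ)
    with hU5def
  set dE := hEherm.eigenvalues with hdEdef
  have hU51 : star U5 * U5 = 1 := spectral_u1 hEherm
  have hU52 : U5 * star U5 = 1 := spectral_u2 hEherm
  have hEspec : E = cdg U5 dE := spectral hEherm
  have hG11 : star X * Ai * X + star Y * Bi * Y = K := by
    rw [hstarX, hstarY, hXdef, hYdef]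
    simp only [smul_mul_assoc, mul_smul_comm, smul_smul]
    rw [haa, hbb]
    rw [show T * P * Ai * (P * T) = T * (P * Ai * P) * T by noncomm_ring, hPAiP,
      show T * Q * Bi * (Q * T) = T * (Q * Bi * Q) * T by noncomm_ring, hQBiQ,
      Matrix.mul_one, hTT, ← add_smul]
    rw [show ((lam : ℝ) : ℂ) + ((μ : ℝ) : ℂ) = 1 by rw [hμdef]; push_cast; ring, one_smul]
  have hGfb : G = fromBlocks K (star X * Ai * Z1 + star Y * Bi * Z2)
      (star Z1 * Ai * X + star Z2 * Bi * Y) E := by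
    rw [hGdef, hstarW, hZdef, hWdef, fromBlocks_multiply, fromBlocks_multiply]
    simp only [Matrix.mul_zero, Matrix.zero_mul, add_zero, zero_add]
    rw [hG11, hEdef]
  -- midpoint
  set M0 := (((1:ℝ)/2 : ℝ) : ℂ) • G + (((1:ℝ)/2 : ℝ) : ℂ) • H with hM0def
  have hM0 : M0 = fromBlocks K 0 0 E := by
    rw [hM0def, hHdef, hThdef, theta_conj, hGfb]
    simp only [toBlocks_fromBlocks₁₁, toBlocks_fromBlocks₁₂, toBlocks_fromBlocks₂₁,
      toBlocks_fromBlocks₂₂]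
    rw [fromBlocks_smul, fromBlocks_smul, fromBlocks_add, half_smul, half_smul,
      smul_neg, smul_neg, add_neg_cancel, add_neg_cancel]
  set UM := fromBlocks U3 0 0 U5 with hUMdef
  set dM : (Fin n ⊕ Fin n) → ℝ := Sum.elim (fun i => (dC i)⁻¹) dE with hdMdef
  have hUM1 : star UM * UM = 1 := fromBlocks_u1 hU31 hU51
  have hUM2 : UM * star UM = 1 := mul_eq_one_comm.mp hUM1
  have hM0dec : M0 = cdg UM dM := by
    rw [hM0, hKdef, hEspec, hUMdef, hdMdef]
    exact cdg_fromBlocks _ _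
  -- transport along the reindexing equivalence
  set e : (Fin n ⊕ Fin n) ≃ Fin (n + n) := finSumFinEquiv with hedef
  set A' := (reindex e e G : Matrix (Fin (n+n)) (Fin (n+n)) ℂ) with hA'def
  set B' := (reindex e e H : Matrix (Fin (n+n)) (Fin (n+n)) ℂ) with hB'def
  have hA'dec : A' = cdg (reindex e e VG) (dZ ∘ e.symm) := by
    rw [hA'def, hGdec]; exact cdg_reindex e VG dZ
  have hB'dec : B' = cdg (reindex e e VH) (dZ ∘ e.symm) := by
    rw [hB'def, hHdec]; exact cdg_reindex e VH dZ
  have hVG1' : star (reindex e e VG : Matrix (Fin (n+n)) (Fin (n+n)) ℂ) * reindex e e VG = 1 :=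
    reindex_u1 e hVG1
  have hVG2' : (reindex e e VG : Matrix (Fin (n+n)) (Fin (n+n)) ℂ) * star (reindex e e VG) = 1 :=
    mul_eq_one_comm.mp hVG1'
  have hVH1' : star (reindex e e VH : Matrix (Fin (n+n)) (Fin (n+n)) ℂ) * reindex e e VH = 1 :=
    reindex_u1 e hVH1
  have hVH2' : (reindex e e VH : Matrix (Fin (n+n)) (Fin (n+n)) ℂ) * star (reindex e e VH) = 1 :=
    mul_eq_one_comm.mp hVH1'
  have hA'pd : A'.PosDef := by
    rw [hA'dec]; exact cdg_posDef hVG1' hVG2' (fun i => hdZ _)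
  have hB'pd : B'.PosDef := by
    rw [hB'dec]; exact cdg_posDef hVH1' hVH2' (fun i => hdZ _)
  have hA'herm : A'.IsHermitian := hA'pd.1
  have hB'herm : B'.IsHermitian := hB'pd.1
  have hmemA : ∀ i, hA'herm.eigenvalues i ∈ Set.Ioi (0:ℝ) := fun i =>
    Set.mem_Ioi.mpr (hA'pd.eigenvalues_pos i)
  have hmemB : ∀ i, hB'herm.eigenvalues i ∈ Set.Ioi (0:ℝ) := fun i =>
    Set.mem_Ioi.mpr (hB'pd.eigenvalues_pos i)
  have hPSD := hf (n + n) A' B' hA'herm hB'herm hmemA hmemB ((1:ℝ)/2) (by norm_num) (by norm_num)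
  have h12 : ((1 - (1:ℝ)/2 : ℝ) : ℂ) = (((1:ℝ)/2 : ℝ) : ℂ) := by norm_num
  rw [h12] at hPSD
  -- identify the applyFun values
  have hfA' : applyFun f A' = reindex e e (cdg VG (fun i => f (dZ i))) := by
    rw [applyFun_decomp f hVG1' hVG2' _ hA'dec, cdg_reindex]
    rfl
  have hfB' : applyFun f B' = reindex e e (cdg VH (fun i => f (dZ i))) := by
    rw [applyFun_decomp f hVH1' hVH2' _ hB'dec, cdg_reindex]
    rfl
  have hmid : (((1:ℝ)/2 : ℝ) : ℂ) • A' + (((1:ℝ)/2 : ℝ) : ℂ) • B' = reindex e e M0 := by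
    rw [hA'def, hB'def, hM0def, reindex_add2, reindex_smul2, reindex_smul2]
  have hUM1' : star (reindex e e UM : Matrix (Fin (n+n)) (Fin (n+n)) ℂ) * reindex e e UM = 1 :=
    reindex_u1 e hUM1
  have hUM2' : (reindex e e UM : Matrix (Fin (n+n)) (Fin (n+n)) ℂ) * star (reindex e e UM) = 1 :=
    mul_eq_one_comm.mp hUM1'
  have hM0dec' : (reindex e e M0 : Matrix (Fin (n+n)) (Fin (n+n)) ℂ)
      = cdg (reindex e e UM) (dM ∘ e.symm) := by
    rw [hM0dec]; exact cdg_reindex e UM dM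
  have hfmid : applyFun f ((((1:ℝ)/2 : ℝ) : ℂ) • A' + (((1:ℝ)/2 : ℝ) : ℂ) • B')
      = reindex e e (cdg UM (fun i => f (dM i))) := by
    rw [hmid, applyFun_decomp f hUM1' hUM2' _ hM0dec', cdg_reindex]
    rfl
  rw [hfA', hfB', hfmid] at hPSD
  -- un-reindex
  set Q0 := (((1:ℝ)/2 : ℝ) : ℂ) • cdg VG (fun i => f (dZ i))
      + (((1:ℝ)/2 : ℝ) : ℂ) • cdg VH (fun i => f (dZ i)) - cdg UM (fun i => f (dM i)) with hQ0def
  have hPSD0 : Q0.PosSemidef := by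
    have h' : ((reindex e e Q0 : Matrix (Fin (n+n)) (Fin (n+n)) ℂ)).PosSemidef := by
      rw [hQ0def, reindex_sub2, reindex_add2, reindex_smul2, reindex_smul2]
      exact hPSD
    have h2 := h'.submatrix (⇑e)
    rw [reindex_apply, submatrix_submatrix, Equiv.symm_comp_self, submatrix_id_id] at h2
    exact h2
  have hJ' := hPSD0.submatrix (Sum.inl : Fin n → Fin n ⊕ Fin n)
  -- compute the upper-left block of Q0
  set FA := cdg U1 (fun i => f ((dA i)⁻¹)) with hFAdef
  set FB := cdg U2 (fun i => f ((dB i)⁻¹)) with hFBdef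
  set KF := cdg U3 (fun i => f ((dC i)⁻¹)) with hKFdef
  have hFZ : cdg UZ (fun i => f (dZ i)) = fromBlocks FA 0 0 FB := by
    rw [hFAdef, hFBdef, cdg_fromBlocks, hUZdef]
    apply cdg_congr
    rintro (i | i) <;> rfl
  have hFG : cdg VG (fun i => f (dZ i)) = star W * (fromBlocks FA 0 0 FB) * W := by
    rw [← hFZ, hVGdef, cdg, cdg, StarMul.star_mul, star_star]
    noncomm_ring
  have hFH : cdg VH (fun i => f (dZ i)) = Th * (cdg VG (fun i => f (dZ i))) * Th := by
    rw [hVHdef, cdg, cdg, StarMul.star_mul, hThs]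
    noncomm_ring
  have hFM : cdg UM (fun i => f (dM i)) = fromBlocks KF 0 0 (cdg U5 (fun i => f (dE i))) := by
    rw [hKFdef, cdg_fromBlocks, hUMdef]
    apply cdg_congr
    rintro (i | i) <;> rfl
  have hWFW : star W * (fromBlocks FA 0 0 FB) * W
      = fromBlocks (star X * FA * X + star Y * FB * Y) (star X * FA * Z1 + star Y * FB * Z2)
          (star Z1 * FA * X + star Z2 * FB * Y) (star Z1 * FA * Z1 + star Z2 * FB * Z2) := by
    rw [hstarW, hWdef, fromBlocks_multiply, fromBlocks_multiply]
    simp only [Matrix.mul_zero, Matrix.zero_mul, add_zero, zero_add]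
  have hQ0block : Q0.submatrix Sum.inl Sum.inl
      = star X * FA * X + star Y * FB * Y - KF := by
    rw [hQ0def, hFG, hFH, hFG, hWFW, hThdef, theta_conj, hFM]
    simp only [toBlocks_fromBlocks₁₁, toBlocks_fromBlocks₁₂, toBlocks_fromBlocks₂₁,
      toBlocks_fromBlocks₂₂]
    rw [submatrix_sub2, submatrix_add2, submatrix_smul2, submatrix_smul2,
      submatrix_inl, submatrix_inl, submatrix_inl, half_smul]
  have hJ : (star X * FA * X + star Y * FB * Y - KF).PosSemidef := by
    rw [← hQ0block]
    exact hJ'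
  -- final assembly
  have hPFAP : P * FA * P = applyFun g A := by
    rw [applyFun_decomp g hU11 hU12 dA hAspec, hPdef, hFAdef, cdg_mul3 hU11]
    apply cdg_congr
    intro i
    rw [hgi]
    rw [show Real.sqrt (dA i) * f ((dA i)⁻¹) * Real.sqrt (dA i)
        = Real.sqrt (dA i) * Real.sqrt (dA i) * f ((dA i)⁻¹) by ring,
      Real.mul_self_sqrt (le_of_lt (hdA i))]
  have hQFBQ : Q * FB * Q = applyFun g B := by
    rw [applyFun_decomp g hU21 hU22 dB hBspec, hQdef, hFBdef, cdg_mul3 hU21]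
    apply cdg_congr
    intro i
    rw [hgi]
    rw [show Real.sqrt (dB i) * f ((dB i)⁻¹) * Real.sqrt (dB i)
        = Real.sqrt (dB i) * Real.sqrt (dB i) * f ((dB i)⁻¹) by ring,
      Real.mul_self_sqrt (le_of_lt (hdB i))]
  have hSKFS : S * KF * S = applyFun g C := by
    rw [applyFun_decomp g hU31 hU32 dC hCspec, hSdef, hKFdef, cdg_mul3 hU31]
    apply cdg_congr
    intro i
    rw [hgi]
    rw [show Real.sqrt (dC i) * f ((dC i)⁻¹) * Real.sqrt (dC i)
        = Real.sqrt (dC i) * Real.sqrt (dC i) * f ((dC i)⁻¹) by ring,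
      Real.mul_self_sqrt (le_of_lt (hdC i))]
  have ht1 : S * (star X * FA * X) * S = (lam : ℂ) • applyFun g A := by
    have hmat : S * (T * P * FA * (P * T)) * S = applyFun g A := by
      rw [show S * (T * P * FA * (P * T)) * S = (S * T) * (P * FA * P) * (T * S) by noncomm_ring,
        hST, hTS, Matrix.one_mul, Matrix.mul_one]
      exact hPFAP
    rw [hstarX, hXdef]
    simp only [smul_mul_assoc, mul_smul_comm, smul_smul]
    rw [haa, hmat]
  have ht2 : S * (star Y * FB * Y) * S = ((μ : ℝ) : ℂ) • applyFun g B := by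
    have hmat : S * (T * Q * FB * (Q * T)) * S = applyFun g B := by
      rw [show S * (T * Q * FB * (Q * T)) * S = (S * T) * (Q * FB * Q) * (T * S) by noncomm_ring,
        hST, hTS, Matrix.one_mul, Matrix.mul_one]
      exact hQFBQ
    rw [hstarY, hYdef]
    simp only [smul_mul_assoc, mul_smul_comm, smul_smul]
    rw [hbb, hmat]
  have hfinal : (lam : ℂ) • applyFun g A + ((μ : ℝ) : ℂ) • applyFun g B - applyFun g C
      = S * (star X * FA * X + star Y * FB * Y - KF) * S := by
    rw [Matrix.mul_sub, Matrix.sub_mul, Matrix.mul_add, Matrix.add_mul]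
    rw [show S * (star X * FA * X) * S + S * (star Y * FB * Y) * S
        - S * KF * S = S * (star X * FA * X) * S + S * (star Y * FB * Y) * S - S * KF * S
        from rfl, ht1, ht2, hSKFS]
  have hSstar : Sᴴ = S := by
    rw [← star_eq_conjTranspose, hSdef, cdg_star]
  have hres := hJ.mul_mul_conjTranspose_same S
  rw [hSstar, ← hfinal] at hres
  exact hres
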